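/- Let Σ be a spacelike graph T = T_Σ(X) in 2D Minkowski space containing the set R = {(T, X) : T = t₀, |X| ≥ X₀} in its causal shadow, i.e., T_Σ(X) > |X| − U₀ for all X (so Σ is not in the chronological past or future of the point (−U₀, 0)). If Σ is spacelike (|T_Σ'| < 1) and passes through a point (T(0), 0) with T(0) < −U₀ + ε for small ε > 0, then the curvature bound |K_Σ| ≤ K_max together with the constraint T_Σ(X) > |X| − U₀ forces K_max ≥ C/ε for some constant C > 0 (i.e., K_max·ε is bounded below by a positive constant). -/

import Mathlib

/-- there is a universal constant `C > 0` such that any C² spacelike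
graph `T = T_Σ(X)` in 1+1 Minkowski space with curvature `|K_Σ| ≤ K_max`, lying
outside the chronological past/future of `(−U₀, 0)` (i.e. `T(X) > |X| − U₀` for all
`X`), and passing through `(T(0), 0)` with `T(0) = −U₀ + ε` for small `ε > 0`, must
have `K_max ≥ C/ε`. -/
theorem stmt_14 :
    ∃ C : ℝ, 0 < C ∧
      ∀ (U₀ ε Kmax : ℝ) (T : ℝ → ℝ), 0 < U₀ → 0 < ε → ε ≤ U₀ → 0 < Kmax →
        ContDiff ℝ 2 T →
        (∀ X : ℝ, |deriv T X| < 1) →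
        (∀ X : ℝ, |deriv (deriv T) X / (1 - (deriv T X) ^ 2) ^ ((3 : ℝ) / 2)| ≤ Kmax) →
        (∀ X : ℝ, |X| - U₀ < T X) →
        T 0 = -U₀ + ε →
        C / ε ≤ Kmax := by
  refine ⟨1/4, by norm_num, ?_⟩
  intro U₀ ε Kmax T hU₀ hε hεU hKpos hT hv hKc hout h0
  have hT2 : ContDiff ℝ ((1:WithTop ℕ∞) + 1) T := by
    rwa [show (1:WithTop ℕ∞) + 1 = 2 from by norm_num]
  obtain ⟨hTd, -, hT1⟩ := contDiff_succ_iff_deriv.mp hT2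
  have hvd : Differentiable ℝ (deriv T) := hT1.differentiable one_ne_zero
  -- Step 1: |T''| ≤ Kmax
  have hT'' : ∀ x : ℝ, |deriv (deriv T) x| ≤ Kmax := by
    intro x
    have hv1 : (deriv T x) ^ 2 < 1 := by
      have h := hv x
      nlinarith [sq_abs (deriv T x), abs_nonneg (deriv T x)]
    have hd0 : (0:ℝ) < (1 - (deriv T x) ^ 2) ^ ((3 : ℝ) / 2) :=
      Real.rpow_pos_of_pos (by linarith) _
    have hd1 : (1 - (deriv T x) ^ 2) ^ ((3 : ℝ) / 2) ≤ 1 :=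
      Real.rpow_le_one (by linarith) (by nlinarith) (by norm_num)
    have h := hKc x
    rw [abs_div, abs_of_pos hd0] at h
    have h2 : |deriv (deriv T) x| ≤ Kmax * ((1 - (deriv T x) ^ 2) ^ ((3 : ℝ) / 2)) :=
      (div_le_iff₀ hd0).mp h
    calc |deriv (deriv T) x| ≤ Kmax * ((1 - (deriv T x) ^ 2) ^ ((3 : ℝ) / 2)) := h2
      _ ≤ Kmax * 1 := by
          exact mul_le_mul_of_nonneg_left hd1 hKpos.le
      _ = Kmax := mul_one _
  -- Step 2: Lipschitz bound on deriv T
  have hlip : ∀ x : ℝ, |deriv T x - deriv T 0| ≤ Kmax * |x| := by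
    intro x
    have := convex_univ.norm_image_sub_le_of_norm_deriv_le (f := deriv T)
      (fun y _ => hvd y) (fun y _ => by
        simpa [Real.norm_eq_abs] using hT'' y) (Set.mem_univ 0) (Set.mem_univ x)
    simpa [Real.norm_eq_abs] using this
  set L : ℝ := 1 / (2 * Kmax) with hLdef
  have hL : 0 < L := by positivity
  have hKL : Kmax * L = 1 / 2 := by
    rw [hLdef, mul_one_div, div_eq_iff (by positivity)]; ring
  -- main inequality: L/2 < ε in both cases
  have key : L / 2 < ε := by
    rcases le_total (deriv T 0) 0 with hc | hc
    · -- T' ≤ 1/2 on [0, L], so T L ≤ T 0 + L/2, but T L > L - U₀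
      have hmono : MonotoneOn (fun y => y / 2 - T y) (Set.Icc 0 L) := by
        apply monotoneOn_of_deriv_nonneg (convex_Icc 0 L)
        · exact (continuous_id.div_const 2).sub hTd.continuous |>.continuousOn
        · exact ((differentiable_id.div_const 2).sub hTd).differentiableOn
        · intro x hx
          rw [interior_Icc] at hx
          have hderiv : deriv (fun y => y / 2 - T y) x = 1 / 2 - deriv T x := by
            have h1 : HasDerivAt (fun y : ℝ => y / 2 - T y) (1 / 2 - deriv T x) x :=
              ((hasDerivAt_id x).div_const 2).sub (hTd x).hasDerivAt
            simpa using h1.deriv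
          rw [hderiv]
          have := hlip x
          rw [abs_of_pos hx.1] at this
          have hxL : Kmax * x ≤ Kmax * L := by
            exact mul_le_mul_of_nonneg_left hx.2.le hKpos.le
          have h1 := abs_le.mp this
          linarith [hKL ▸ hxL]
      have h1 := hmono (Set.left_mem_Icc.mpr hL.le) (Set.right_mem_Icc.mpr hL.le) hL.le
      simp only [zero_div, zero_sub] at h1
      -- h1 : -T 0 ≤ L / 2 - T L
      have h2 := hout L
      rw [abs_of_pos hL] at h2
      linarith
    · -- T' ≥ -1/2 on [-L, 0], so T (-L) ≤ T 0 + L/2, but T (-L) > L - U₀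
      have hmono : MonotoneOn (fun y => y / 2 + T y) (Set.Icc (-L) 0) := by
        apply monotoneOn_of_deriv_nonneg (convex_Icc (-L) 0)
        · exact (continuous_id.div_const 2).add hTd.continuous |>.continuousOn
        · exact ((differentiable_id.div_const 2).add hTd).differentiableOn
        · intro x hx
          rw [interior_Icc] at hx
          have hderiv : deriv (fun y => y / 2 + T y) x = 1 / 2 + deriv T x := by
            have h1 : HasDerivAt (fun y : ℝ => y / 2 + T y) (1 / 2 + deriv T x) x :=
              ((hasDerivAt_id x).div_const 2).add (hTd x).hasDerivAt
            simpa using h1.deriv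
          rw [hderiv]
          have := hlip x
          rw [abs_of_neg hx.2] at this
          have hxL : Kmax * (-x) ≤ Kmax * L := by
            apply mul_le_mul_of_nonneg_left _ hKpos.le
            linarith [hx.1]
          have h1 := abs_le.mp this
          linarith [hKL ▸ hxL]
      have h1 := hmono (Set.left_mem_Icc.mpr (by linarith))
        (Set.right_mem_Icc.mpr (by linarith)) (by linarith)
      simp only [zero_div, zero_add] at h1
      -- h1 : -L/2 + T (-L) ≤ T 0
      have h2 := hout (-L)
      rw [abs_of_neg (by linarith : -L < 0)] at h2
      simp only [neg_neg] at h2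
      linarith
  -- conclude
  rw [div_le_iff₀ hε]
  nlinarith [mul_lt_mul_of_pos_left key hKpos, hKL]
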